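/- The set of monomials lying in Q but not in J is exactly { x₁^{α₁}⋯xₙ^{αₙ} : (α₁,…,αₙ) ∈ ℕⁿ with 2t ≤ αᵢ ≤ 3t−1 for every i }. -/

import Mathlib

open MvPolynomial

/-- The monomial `μ = x₁ᵗ ⋯ xₙᵗ`. -/
noncomputable def mu (K : Type*) [Field K] (n t : ℕ) : MvPolynomial (Fin n) K :=
  ∏ i : Fin n, X i ^ t

/-- The skeleton ideal `J = ⟨x₁^{4t},…,xₙ^{4t}, x₁^{2t}μ,…,xₙ^{2t}μ⟩`. -/
noncomputable def Jidl (K : Type*) [Field K] (n t : ℕ) : Ideal (MvPolynomial (Fin n) K) :=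
  Ideal.span
    ((Set.range fun j : Fin n => (X j : MvPolynomial (Fin n) K) ^ (4 * t)) ∪
     (Set.range fun j : Fin n => (X j : MvPolynomial (Fin n) K) ^ (2 * t) * mu K n t))

/-- The monomial `q = μ² = x₁^{2t} ⋯ xₙ^{2t}`. -/
noncomputable def qmon (K : Type*) [Field K] (n t : ℕ) : MvPolynomial (Fin n) K :=
  ∏ i : Fin n, X i ^ (2 * t)

/-- The principal ideal `Q = ⟨q⟩`. -/
noncomputable def Qidl (K : Type*) [Field K] (n t : ℕ) : Ideal (MvPolynomial (Fin n) K) :=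
  Ideal.span {qmon K n t}

/-- A polynomial is a monomial if it is of the form `monomial s 1`. -/
def IsMonomial {K : Type*} [Field K] {σ : Type*} (p : MvPolynomial σ K) : Prop :=
  ∃ s : σ →₀ ℕ, p = monomial s 1

/-- The constant exponent vector with all entries `t`. -/
noncomputable def cexp (n t : ℕ) : Fin n →₀ ℕ :=
  Finsupp.equivFunOnFinite.symm fun _ => t

lemma cexp_apply (n t : ℕ) (i : Fin n) : cexp n t i = t := rfl

lemma prod_monomial {K σ ι : Type*} [Field K] (s : Finset ι) (f : ι → (σ →₀ ℕ)) :
    (∏ i ∈ s, monomial (f i) (1 : K)) = monomial (∑ i ∈ s, f i) 1 := by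
  classical
  induction s using Finset.induction with
  | empty => simp
  | insert _ _ h ih =>
    rw [Finset.prod_insert h, Finset.sum_insert h, ih, monomial_mul, one_mul]

lemma prod_X_pow_eq {K : Type*} [Field K] (n t : ℕ) :
    (∏ i : Fin n, (X i : MvPolynomial (Fin n) K) ^ t) = monomial (cexp n t) 1 := by
  simp only [X_pow_eq_monomial]
  rw [prod_monomial]
  have h : (∑ i : Fin n, Finsupp.single i t) = cexp n t := by
    ext j
    simp [Finsupp.single_apply, cexp_apply]
  rw [h]

lemma mu_eq (K : Type*) [Field K] (n t : ℕ) : mu K n t = monomial (cexp n t) 1 :=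
  prod_X_pow_eq n t

lemma qmon_eq (K : Type*) [Field K] (n t : ℕ) :
    qmon K n t = monomial (cexp n (2 * t)) 1 :=
  prod_X_pow_eq n (2 * t)

lemma monomial_mem_span_iff {K : Type*} [Field K] {n : ℕ} (α : Fin n →₀ ℕ)
    (S : Set (Fin n →₀ ℕ)) :
    (monomial α (1 : K)) ∈ Ideal.span ((fun s => monomial s (1 : K)) '' S) ↔
      ∃ s ∈ S, s ≤ α := by
  rw [mem_ideal_span_monomial_image]
  simp [support_monomial]

lemma Jidl_eq (K : Type*) [Field K] (n t : ℕ) :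
    Jidl K n t = Ideal.span ((fun s => monomial s (1 : K)) ''
      ((Set.range fun j : Fin n => Finsupp.single j (4 * t)) ∪
       (Set.range fun j : Fin n => Finsupp.single j (2 * t) + cexp n t))) := by
  have h1 : (fun j : Fin n => (X j : MvPolynomial (Fin n) K) ^ (4 * t)) =
      fun j => monomial (Finsupp.single j (4 * t)) 1 := by
    funext j; rw [X_pow_eq_monomial]
  have h2 : (fun j : Fin n => (X j : MvPolynomial (Fin n) K) ^ (2 * t) * mu K n t) =
      fun j => monomial (Finsupp.single j (2 * t) + cexp n t) 1 := by
    funext j; rw [X_pow_eq_monomial, mu_eq, monomial_mul, one_mul]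
  rw [Jidl, h1, h2]
  congr 1
  rw [Set.image_union, ← Set.range_comp, ← Set.range_comp]
  rfl

lemma Qidl_eq (K : Type*) [Field K] (n t : ℕ) :
    Qidl K n t = Ideal.span ((fun s => monomial s (1 : K)) '' {cexp n (2 * t)}) := by
  rw [Qidl, qmon_eq, Set.image_singleton]

/-- The monomials lying in `Q` but not in `J` are exactly the monomials
`x₁^{α₁}⋯xₙ^{αₙ}` with `2t ≤ αᵢ ≤ 3t−1` for every `i`. -/
theorem monomials_in_Q_not_in_J (K : Type*) [Field K] (n t : ℕ)
    (hn : 2 ≤ n) (ht : 1 ≤ t) :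
    {p : MvPolynomial (Fin n) K | IsMonomial p ∧ p ∈ Qidl K n t ∧ p ∉ Jidl K n t} =
    {p : MvPolynomial (Fin n) K |
      ∃ α : Fin n →₀ ℕ, (∀ i, 2 * t ≤ α i ∧ α i ≤ 3 * t - 1) ∧ p = monomial α 1} := by
  ext p
  simp only [Set.mem_setOf_eq]
  constructor
  · rintro ⟨⟨α, rfl⟩, hQ, hJ⟩
    rw [Qidl_eq, monomial_mem_span_iff] at hQ
    obtain ⟨s, hs, hsle⟩ := hQ
    rw [Set.mem_singleton_iff] at hs
    subst hs
    have h2t : ∀ i, 2 * t ≤ α i := fun i => by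
      have := hsle i; rwa [cexp_apply] at this
    refine ⟨α, fun i => ⟨h2t i, ?_⟩, rfl⟩
    by_contra hlt
    push_neg at hlt
    have h3t : 3 * t ≤ α i := by omega
    apply hJ
    rw [Jidl_eq, monomial_mem_span_iff]
    refine ⟨Finsupp.single i (2 * t) + cexp n t, Or.inr ⟨i, rfl⟩, ?_⟩
    intro k
    rcases eq_or_ne k i with rfl | hk
    · simp only [Finsupp.add_apply, Finsupp.single_eq_same, cexp_apply]
      omega
    · have := h2t k
      simp only [Finsupp.add_apply, Finsupp.single_eq_of_ne' (Ne.symm hk), cexp_apply]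
      omega
  · rintro ⟨α, hα, rfl⟩
    refine ⟨⟨α, rfl⟩, ?_, ?_⟩
    · rw [Qidl_eq, monomial_mem_span_iff]
      refine ⟨cexp n (2 * t), rfl, fun k => ?_⟩
      rw [cexp_apply]
      exact (hα k).1
    · rw [Jidl_eq, monomial_mem_span_iff]
      rintro ⟨s, hs | hs, hsle⟩ <;> obtain ⟨j, rfl⟩ := hs
      · have h1 := hsle j
        rw [Finsupp.single_eq_same] at h1
        have := (hα j).2
        omega
      · have h1 := hsle j
        rw [Finsupp.add_apply, Finsupp.single_eq_same, cexp_apply] at h1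
        have := (hα j).2
        omega
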